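/- Let K be a field and B a nontrivial commutative K-algebra that is finite-dimensional as a K-vector space with nondegenerate trace form over K. Then B is K-algebra isomorphic to a finite product ∏_{i=1}^r K[X]/(g_i), where each g_i ∈ K[X] is a monic separable polynomial. -/

import Mathlib

open Module Polynomial IntermediateField Function

lemma trace_pi {K : Type*} [Field K] {ι : Type*} [Fintype ι] (A : ι → Type*)
    [∀ i, CommRing (A i)] [∀ i, Algebra K (A i)] [∀ i, FiniteDimensional K (A i)]
    (a : ∀ i, A i) :
    Algebra.trace K (∀ i, A i) a = ∑ i, Algebra.trace K (A i) (a i) := by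
  classical
  let b : ∀ i, Basis (Module.Free.ChooseBasisIndex K (A i)) K (A i) :=
    fun i => Module.Free.chooseBasis K (A i)
  rw [Algebra.trace_eq_matrix_trace (Pi.basis b), Matrix.trace, ← Finset.univ_sigma_univ, Finset.sum_sigma]
  refine Finset.sum_congr rfl fun i _ => ?_
  rw [Algebra.trace_eq_matrix_trace (b i), Matrix.trace]
  refine Finset.sum_congr rfl fun j _ => ?_
  simp only [Matrix.diag, Algebra.leftMulMatrix_apply,
    LinearMap.toMatrix_apply, Pi.basis_apply, Pi.basis_repr]
  congr 1
  simp [Pi.single_apply, mul_comm]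

lemma dvd_finrank_of_purelyInseparable (F L : Type*) [Field F] [Field L] [Algebra F L]
    [FiniteDimensional F L] [IsPurelyInseparable F L] (p : ℕ) [ExpChar F p]
    (hn : finrank F L ≠ 1) : p ∣ finrank F L := by
  have hbt : (⊥ : IntermediateField F L) ≠ ⊤ := by
    intro hc
    apply hn
    have h1 : finrank F (⊤ : IntermediateField F L) = 1 := by
      rw [← hc]; exact IntermediateField.finrank_eq_one_iff.mpr rfl
    rwa [IntermediateField.finrank_top'] at h1
  obtain ⟨y, -, hy⟩ :=
    SetLike.exists_of_lt ((bot_le (a := (⊤ : IntermediateField F L))).lt_of_ne hbt)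
  have hyi : IsIntegral F y := Algebra.IsIntegral.isIntegral y
  obtain ⟨n, c, hmin⟩ := IsPurelyInseparable.minpoly_eq_X_pow_sub_C F p y
  have hdeg : (minpoly F y).natDegree = p ^ n := by
    rw [hmin]
    have : p ^ n ≠ 0 := (expChar_pow_pos F p n).ne'
    simpa using (Polynomial.natDegree_X_pow_sub_C (n := p ^ n) (a := c))
  have hrank : finrank F F⟮y⟯ = p ^ n := by rw [IntermediateField.adjoin.finrank hyi, hdeg]
  have hne1 : p ^ n ≠ 1 := by
    intro hc
    rw [hc] at hrank
    have h2 := IntermediateField.finrank_eq_one_iff.mp hrank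
    have h3 := IntermediateField.adjoin_simple_eq_bot_iff.mp h2
    exact hy h3
  have hn1 : n ≠ 0 := by rintro rfl; simp at hne1
  refine (dvd_pow_self p hn1).trans ?_
  rw [← finrank_mul_finrank F F⟮y⟯ L, hrank]
  exact Dvd.intro _ rfl

lemma trace_eq_zero_of_purelyInseparable (F L : Type*) [Field F] [Field L] [Algebra F L]
    [FiniteDimensional F L] [IsPurelyInseparable F L] (p : ℕ) (hp : p.Prime) [CharP F p]
    (hn : finrank F L ≠ 1) (y : L) : Algebra.trace F L y = 0 := by
  have hexp : ExpChar F p := ExpChar.prime hp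
  rw [trace_eq_trace_adjoin F y]
  by_cases h1 : finrank F⟮y⟯ L = 1
  · have hyi : IsIntegral F y := Algebra.IsIntegral.isIntegral y
    have hrk : finrank F F⟮y⟯ = finrank F L := by
      have := finrank_mul_finrank F F⟮y⟯ L
      rwa [h1, mul_one] at this
    obtain ⟨n, c, hmin⟩ := IsPurelyInseparable.minpoly_eq_X_pow_sub_C F p y
    have hq0 : p ^ n ≠ 0 := (expChar_pow_pos F p n).ne'
    have hdeg : (minpoly F y).natDegree = p ^ n := by
      rw [hmin]; simpa using (Polynomial.natDegree_X_pow_sub_C (n := p ^ n) (a := c))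
    have hq1 : p ^ n ≠ 1 := by
      intro hc
      apply hn
      rw [← hrk, IntermediateField.adjoin.finrank hyi, hdeg, hc]
    have htr : Algebra.trace F F⟮y⟯ (AdjoinSimple.gen F y) = 0 := by
      have hpb := PowerBasis.trace_gen_eq_nextCoeff_minpoly (IntermediateField.adjoin.powerBasis hyi)
      rw [IntermediateField.adjoin.powerBasis_gen] at hpb
      rw [hpb, IntermediateField.minpoly_gen, hmin]
      have : ((X : F[X]) ^ p ^ n - C c).nextCoeff = 0 := by
        rw [Polynomial.nextCoeff]
        have hnd : ((X : F[X]) ^ p ^ n - C c).natDegree = p ^ n := by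
          simpa using (Polynomial.natDegree_X_pow_sub_C (n := p ^ n) (a := c))
        rw [hnd, if_neg hq0]
        have hlt : p ^ n - 1 < p ^ n := Nat.sub_lt (Nat.pos_of_ne_zero hq0) one_pos
        have hne0 : p ^ n - 1 ≠ 0 := by
          intro hc
          exact hq1 (le_antisymm (by omega) (Nat.one_le_iff_ne_zero.mpr hq0))
        simp [Polynomial.coeff_X_pow, hlt.ne, hne0, Polynomial.coeff_C]
      rw [this, neg_zero]
    rw [htr, smul_zero]
  · have : IsPurelyInseparable F⟮y⟯ L := IsPurelyInseparable.tower_top F F⟮y⟯ L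
    have : ExpChar F⟮y⟯ p := expChar_of_injective_algebraMap (algebraMap F F⟮y⟯).injective p
    have hdvd : p ∣ finrank F⟮y⟯ L := dvd_finrank_of_purelyInseparable F⟮y⟯ L p h1
    have hcast : (finrank F⟮y⟯ L : F) = 0 := (CharP.cast_eq_zero_iff F p _).mpr hdvd
    rw [nsmul_eq_mul, hcast, zero_mul]

lemma trace_eq_zero_of_not_isSeparable (K L : Type*) [Field K] [Field L] [Algebra K L]
    [FiniteDimensional K L] (h : ¬ Algebra.IsSeparable K L) (x : L) :
    Algebra.trace K L x = 0 := by
  obtain ⟨p, hp⟩ := CharP.exists K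
  rcases (CharP.char_is_prime_or_zero K p) with hprime | hzero
  swap
  · subst hzero
    have : CharZero K := CharP.charP_to_charZero K
    exact absurd (Algebra.IsSeparable.of_integral K L) h
  set F := separableClosure K L with hF
  have hpi : IsPurelyInseparable F L := separableClosure.isPurelyInseparable K L
  have hCF : CharP F p := charP_of_injective_algebraMap (algebraMap K F).injective p
  have hfr : finrank F L ≠ 1 := by
    intro hc
    apply h
    have hbt : (⊥ : Subalgebra F L) = ⊤ := Subalgebra.bot_eq_top_iff_finrank_eq_one.mpr hc
    have hbot : F = ⊤ := by
      rw [eq_top_iff]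
      intro z _
      have hz : z ∈ (⊥ : Subalgebra F L) := by rw [hbt]; trivial
      obtain ⟨y, rfl⟩ := Algebra.mem_bot.mp hz
      exact y.2
    rw [← separableClosure.eq_top_iff]
    exact hbot
  have h0 : Algebra.trace F L x = 0 :=
    trace_eq_zero_of_purelyInseparable F L p hprime hfr x
  rw [← Algebra.trace_trace (S := F) (x := x), h0, map_zero]

/-- A nontrivial finite-dimensional commutative algebra `B` over a field `K` with
nondegenerate trace form is isomorphic to a finite product of algebras `K[X]/(gᵢ)`
for monic separable polynomials `gᵢ`. -/
theorem stmt9 {K B : Type*} [Field K] [CommRing B] [Nontrivial B] [Algebra K B]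
    [FiniteDimensional K B]
    (h : (Algebra.traceForm K B).Nondegenerate) :
    ∃ (r : ℕ) (g : Fin r → Polynomial K), (∀ i, (g i).Monic ∧ (g i).Separable) ∧
      Nonempty (B ≃ₐ[K] ∀ i, AdjoinRoot (g i)) := by
  classical
  have hred : IsReduced B := by
    constructor
    intro x hx
    apply h.1 x
    intro y
    rw [Algebra.traceForm_apply]
    have hnil : IsNilpotent (x * y) := Commute.isNilpotent_mul_right (Commute.all x y) hx
    exact (Algebra.isNilpotent_trace_of_isNilpotent hnil).eq_zero
  haveI hart : IsArtinianRing B := isArtinian_of_tower K inferInstance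
  haveI : Finite {I : Ideal B | I.IsMaximal} := (IsArtinianRing.setOfPred_isMaximal_finite B).to_subtype
  haveI := Fintype.ofFinite {I : Ideal B | I.IsMaximal}
  set r := Fintype.card {I : Ideal B | I.IsMaximal} with hr
  let e : Fin r ≃ {I : Ideal B | I.IsMaximal} := (Fintype.equivFin _).symm
  let Idl : Fin r → Ideal B := fun i => (e i).1
  have hmax : ∀ i, (Idl i).IsMaximal := fun i => (e i).2
  letI : ∀ i, Field (B ⧸ Idl i) := fun i => @Ideal.Quotient.field _ _ (Idl i) (hmax i)
  let φ : B →ₐ[K] ∀ i, B ⧸ Idl i := Pi.algHom _ _ fun i => Ideal.Quotient.mkₐ K (Idl i)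
  have hinj : Injective φ := by
    rw [injective_iff_map_eq_zero]
    intro x hx
    have hnil : IsNilpotent x := by
      rw [nilpotent_iff_mem_prime]
      intro J hJ
      have hJm : J.IsMaximal := (IsArtinianRing.isPrime_iff_isMaximal J).mp hJ
      have : J = Idl (e.symm ⟨J, hJm⟩) :=
        (congrArg Subtype.val (e.apply_symm_apply ⟨J, hJm⟩)).symm
      rw [this]
      have := congrFun hx (e.symm ⟨J, hJm⟩)
      exact (Ideal.Quotient.eq_zero_iff_mem).mp this
    exact hnil.eq_zero
  have hsurj : Surjective φ := by
    intro g
    have hco : Pairwise (IsCoprime on Idl) := by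
      intro i j hij
      refine Ideal.isCoprime_iff_sup_eq.mpr (Ideal.IsMaximal.coprime_of_ne (hmax i) (hmax j) ?_)
      intro hc
      exact hij (e.injective (Subtype.ext hc))
    obtain ⟨z, hz⟩ := Ideal.quotientInfToPiQuotient_surj hco g
    obtain ⟨x, rfl⟩ := Ideal.Quotient.mk_surjective z
    refine ⟨x, ?_⟩
    funext i
    have := congrFun hz i
    rwa [Ideal.quotientInfToPiQuotient_mk'] at this
  let ψ : B ≃ₐ[K] ∀ i, B ⧸ Idl i := AlgEquiv.ofBijective φ ⟨hinj, hsurj⟩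
  have hsep : ∀ i, Algebra.IsSeparable K (B ⧸ Idl i) := by
    intro i
    by_contra hns
    have hx0 : ψ.symm (Pi.single i 1 : ∀ j, B ⧸ Idl j) = 0 := by
      apply h.1
      intro y
      rw [Algebra.traceForm_apply, ← Algebra.trace_eq_of_algEquiv ψ, map_mul,
        AlgEquiv.apply_symm_apply, trace_pi]
      refine Finset.sum_eq_zero fun j _ => ?_
      by_cases hji : j = i
      · subst hji
        exact trace_eq_zero_of_not_isSeparable K _ hns _
      · rw [Pi.mul_apply, Pi.single_eq_of_ne hji, zero_mul, map_zero]
    have hps : (Pi.single i (1 : B ⧸ Idl i) : ∀ j, B ⧸ Idl j) = (0 : ∀ j, B ⧸ Idl j) := by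
      have := congrArg ψ hx0
      rwa [AlgEquiv.apply_symm_apply, map_zero] at this
    have h1 : (Pi.single i (1 : B ⧸ Idl i) : ∀ j, B ⧸ Idl j) i = (0 : ∀ j, B ⧸ Idl j) i := by
      rw [hps]
    rw [Pi.single_eq_same] at h1
    exact one_ne_zero h1
  have hint : ∀ i (x : B ⧸ Idl i), IsIntegral K x := fun i x => Algebra.IsIntegral.isIntegral x
  choose α hα using fun i => Field.exists_primitive_element K (B ⧸ Idl i)
  refine ⟨r, fun i => minpoly K (α i), fun i =>
    ⟨minpoly.monic (hint i (α i)), Algebra.IsSeparable.isSeparable K (α i)⟩, ?_⟩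
  have eqv : ∀ i, AdjoinRoot (minpoly K (α i)) ≃ₐ[K] B ⧸ Idl i := fun i =>
    ((IntermediateField.adjoinRootEquivAdjoin K (hint i (α i))).trans
      (IntermediateField.equivOfEq (hα i))).trans IntermediateField.topEquiv
  exact ⟨ψ.trans (AlgEquiv.piCongrRight fun i => (eqv i).symm)⟩
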